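/- Suppose (s̃,ã) has support disjoint from (s_t,a_t). If P(s̃'|s̃,ã) ≤ 1 − P(s_{t+1}|s_t,a_t), then there exists a consistent probability vector θ such that the counterfactual probability P̃(s̃'|s̃,ã) equals 0. -/
import Mathlib

open Finset

lemma pi_total {ι σ : Type*} [Fintype ι] [Fintype σ] [DecidableEq ι]
    (w : ι → σ → ℝ) (hw : ∀ i, ∑ s, w i s = 1) :
    ∑ g : ι → σ, ∏ i, w i (g i) = 1 := by
  rw [← Fintype.prod_sum]
  simp [hw]

lemma pi_fiber {ι σ : Type*} [Fintype ι] [Fintype σ] [DecidableEq ι] [DecidableEq σ]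
    (w : ι → σ → ℝ) (hw : ∀ i, ∑ s, w i s = 1) (i0 : ι) (s0 : σ) :
    ∑ g : ι → σ, (if g i0 = s0 then ∏ i, w i (g i) else 0) = w i0 s0 := by
  have key : ∀ g : ι → σ,
      (if g i0 = s0 then ∏ i, w i (g i) else 0)
        = ∏ i, (if i = i0 then (if g i = s0 then w i (g i) else 0) else w i (g i)) := by
    intro g
    by_cases h : g i0 = s0
    · rw [if_pos h]
      refine Finset.prod_congr rfl fun i _ => ?_
      by_cases hi : i = i0 <;> simp [hi, h]
    · rw [if_neg h]
      refine (Finset.prod_eq_zero (Finset.mem_univ i0) ?_).symm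
      simp [h]
  simp_rw [key]
  rw [← Fintype.prod_sum (fun i s => if i = i0 then (if s = s0 then w i s else 0) else w i s)]
  rw [Finset.prod_eq_single i0]
  · simp
  · intro b _ hb
    simp [hb, hw b]
  · simp

lemma coupling_exists {S : Type*} [Fintype S] [DecidableEq S]
    (p q : S → ℝ) (hp0 : ∀ x, 0 ≤ p x) (hq0 : ∀ y, 0 ≤ q y)
    (hp1 : ∑ x, p x = 1) (hq1 : ∑ y, q y = 1) (x0 y0 : S)
    (hle : p x0 + q y0 ≤ 1) :
    ∃ μ : S → S → ℝ, (∀ x y, 0 ≤ μ x y) ∧ (∀ x, ∑ y, μ x y = p x) ∧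
      (∀ y, ∑ x, μ x y = q y) ∧ μ x0 y0 = 0 := by
  classical
  set α := p x0 with hα
  set β := q y0 with hβ
  by_cases hz : α * β = 0
  · refine ⟨fun x y => p x * q y, ?_, ?_, ?_, hz⟩
    · intro x y; exact mul_nonneg (hp0 x) (hq0 y)
    · intro x; rw [← Finset.mul_sum, hq1, mul_one]
    · intro y; rw [← Finset.sum_mul, hp1, one_mul]
  · have hα0 : 0 < α := lt_of_le_of_ne (hp0 x0) fun h => hz (by rw [← h]; ring)
    have hβ0 : 0 < β := lt_of_le_of_ne (hq0 y0) fun h => hz (by rw [← h]; ring)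
    have hB1 : 0 < 1 - β := by linarith
    have hA1 : 0 < 1 - α := by linarith
    have hC : 0 ≤ 1 - α - β := by linarith
    have hA1' : (1 : ℝ) - α ≠ 0 := ne_of_gt hA1
    have hB1' : (1 : ℝ) - β ≠ 0 := ne_of_gt hB1
    refine ⟨fun x y => if x = x0 then (if y = y0 then 0 else α * q y / (1 - β))
        else (if y = y0 then β * p x / (1 - α)
        else p x * q y * (1 - α - β) / ((1 - α) * (1 - β))), ?_, ?_, ?_, by simp⟩
    · intro x y
      dsimp only
      split_ifs
      · exact le_rfl
      · exact div_nonneg (mul_nonneg hα0.le (hq0 y)) hB1.le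
      · exact div_nonneg (mul_nonneg hβ0.le (hp0 x)) hA1.le
      · exact div_nonneg (mul_nonneg (mul_nonneg (hp0 x) (hq0 y)) hC) (mul_nonneg hA1.le hB1.le)
    · intro x
      by_cases hx : x = x0
      · rw [hx]
        have key : ∀ y, (if (x0 : S) = x0 then (if y = y0 then 0 else α * q y / (1 - β))
            else (if y = y0 then β * p x0 / (1 - α)
            else p x0 * q y * (1 - α - β) / ((1 - α) * (1 - β))))
            = α / (1 - β) * q y + (if y = y0 then -(α * β / (1 - β)) else 0) := by
          intro y
          by_cases hy : y = y0 <;> simp [hy, ← hβ] <;> ring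
        rw [Finset.sum_congr rfl (fun i _ => key i)]
        rw [Finset.sum_add_distrib, ← Finset.mul_sum, hq1, Finset.sum_ite_eq' Finset.univ y0]
        simp only [Finset.mem_univ, if_true]
        field_simp
        rw [← hα]; ring
      · have key : ∀ y, (if x = x0 then (if y = y0 then 0 else α * q y / (1 - β))
            else (if y = y0 then β * p x / (1 - α)
            else p x * q y * (1 - α - β) / ((1 - α) * (1 - β))))
            = p x * (1 - α - β) / ((1 - α) * (1 - β)) * q y
              + (if y = y0 then β * p x / (1 - α)
                  - p x * (1 - α - β) / ((1 - α) * (1 - β)) * β else 0) := by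
          intro y
          by_cases hy : y = y0 <;> simp [hx, hy, ← hβ] <;> ring
        rw [Finset.sum_congr rfl (fun i _ => key i)]
        rw [Finset.sum_add_distrib, ← Finset.mul_sum, hq1, Finset.sum_ite_eq' Finset.univ y0]
        simp only [Finset.mem_univ, if_true]
        field_simp
        ring
    · intro y
      by_cases hy : y = y0
      · rw [hy]
        have key : ∀ x, (if x = x0 then (if (y0 : S) = y0 then 0 else α * q y0 / (1 - β))
            else (if (y0 : S) = y0 then β * p x / (1 - α)
            else p x * q y0 * (1 - α - β) / ((1 - α) * (1 - β))))
            = β / (1 - α) * p x + (if x = x0 then -(β * α / (1 - α)) else 0) := by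
          intro x
          by_cases hx : x = x0 <;> simp [hx, ← hα] <;> ring
        rw [Finset.sum_congr rfl (fun i _ => key i)]
        rw [Finset.sum_add_distrib, ← Finset.mul_sum, hp1, Finset.sum_ite_eq' Finset.univ x0]
        simp only [Finset.mem_univ, if_true]
        field_simp
        rw [← hβ]; ring
      · have key : ∀ x, (if x = x0 then (if y = y0 then 0 else α * q y / (1 - β))
            else (if y = y0 then β * p x / (1 - α)
            else p x * q y * (1 - α - β) / ((1 - α) * (1 - β))))
            = q y * (1 - α - β) / ((1 - α) * (1 - β)) * p x
              + (if x = x0 then α * q y / (1 - β)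
                  - q y * (1 - α - β) / ((1 - α) * (1 - β)) * α else 0) := by
          intro x
          by_cases hx : x = x0 <;> simp [hx, hy, ← hα] <;> ring
        rw [Finset.sum_congr rfl (fun i _ => key i)]
        rw [Finset.sum_add_distrib, ← Finset.mul_sum, hp1, Finset.sum_ite_eq' Finset.univ x0]
        simp only [Finset.mem_univ, if_true]
        field_simp
        ring

theorem cf_prob_disjoint_lb_zero_attained {S A : Type*} [Fintype S] [Fintype A] [DecidableEq S]
    (P : S → S → A → ℝ)
    (hP0 : ∀ s' s a, 0 ≤ P s' s a)
    (hPsum : ∀ s a, ∑ s', P s' s a = 1)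
    (st st1 sc sc' : S) (a_t ac : A)
    (hpos : 0 < P st1 st a_t)
    (hdisj : ∀ s' : S, ¬(0 < P s' sc ac ∧ 0 < P s' st a_t))
    (hle : P sc' sc ac ≤ 1 - P st1 st a_t) :
    ∃ (U : Type) (_ : Fintype U) (f : S → A → U → S) (θ : U → ℝ),
      (∀ u, 0 ≤ θ u) ∧ (∑ u, θ u = 1) ∧
      (∀ s a s', ∑ u ∈ Finset.univ.filter (fun u => f s a u = s'), θ u = P s' s a) ∧
      (∑ u ∈ Finset.univ.filter (fun u => f sc ac u = sc' ∧ f st a_t u = st1), θ u)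
          / P st1 st a_t = 0 := by
  classical
  obtain ⟨μ, hμ0, hrow, hcol, hμz⟩ :=
    coupling_exists (fun x => P x sc ac) (fun y => P y st a_t)
      (fun x => hP0 x sc ac) (fun y => hP0 y st a_t) (hPsum sc ac) (hPsum st a_t)
      sc' st1 (by linarith)
  have hne : (sc, ac) ≠ (st, a_t) := by
    intro h
    have h1 : P st1 sc ac = 0 := by
      have := hdisj st1
      have h0 := hP0 st1 sc ac
      by_contra hc
      exact this ⟨lt_of_le_of_ne h0 (Ne.symm hc), hpos⟩
    rw [Prod.mk.injEq] at h
    rw [h.1, h.2] at h1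
    linarith
  set ν := fun g : (S × A) → S => ∏ i : S × A, P (g i) i.1 i.2 with hν
  have hν0 : ∀ g, 0 ≤ ν g := fun g => Finset.prod_nonneg fun i _ => hP0 _ _ _
  have hν1 : ∑ g : (S × A) → S, ν g = 1 :=
    pi_total (fun (i : S × A) (s : S) => P s i.1 i.2) (fun (i : S × A) => hPsum i.1 i.2)
  have hfib : ∀ (i0 : S × A) (s0 : S),
      ∑ g : (S × A) → S, (if g i0 = s0 then ν g else 0) = P s0 i0.1 i0.2 :=
    fun i0 s0 => pi_fiber (fun (i : S × A) (s : S) => P s i.1 i.2)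
      (fun (i : S × A) => hPsum i.1 i.2) i0 s0
  have hμtot : ∑ x : S, ∑ y : S, μ x y = 1 := by
    simp_rw [hrow]; exact hPsum sc ac
  -- the model on the (possibly large) type V, to be transported to `Type` later
  set fV := fun (s : S) (a : A) (u : S × S × ((S × A) → S)) =>
    if (s, a) = (sc, ac) then u.1
      else if (s, a) = (st, a_t) then u.2.1 else u.2.2 (s, a) with hfV
  set θV := fun u : S × S × ((S × A) → S) => μ u.1 u.2.1 * ν u.2.2 with hθV
  have hθ0 : ∀ v, 0 ≤ θV v := fun v => mul_nonneg (hμ0 _ _) (hν0 _)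
  have hθ1 : ∑ v, θV v = 1 := by
    rw [Fintype.sum_prod_type]
    simp_rw [Fintype.sum_prod_type, hθV, ← Finset.mul_sum, hν1, mul_one]
    exact hμtot
  have hmarg : ∀ s a s', ∑ v, (if fV s a v = s' then θV v else 0) = P s' s a := by
    intro s a s'
    rw [Fintype.sum_prod_type]
    simp_rw [Fintype.sum_prod_type]
    by_cases h1 : (s, a) = (sc, ac)
    · simp only [hfV, hθV, h1, if_pos rfl, if_true]
      have k1 : ∀ x y : S, ∑ g : (S × A) → S, (if x = s' then μ x y * ν g else 0)
          = (if x = s' then μ x y else 0) := by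
        intro x y
        by_cases hx : x = s' <;> simp [hx, ← Finset.mul_sum, hν1]
      simp_rw [k1]
      have k2 : ∀ x : S, ∑ y : S, (if x = s' then μ x y else 0)
          = (if x = s' then P x sc ac else 0) := by
        intro x
        by_cases hx : x = s' <;> simp [hx, hrow]
      simp_rw [k2]
      rw [Finset.sum_ite_eq' Finset.univ s' (fun x => P x sc ac)]
      rw [Prod.mk.injEq] at h1
      simp [h1.1, h1.2]
    · by_cases h2 : (s, a) = (st, a_t)
      · have c1 : ((s, a) = (sc, ac)) = False := eq_false h1
        have c2 : ((s, a) = (st, a_t)) = True := eq_true h2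
        simp only [hfV, hθV, c1, c2, if_true, if_false, ite_true, ite_false]
        have k1 : ∀ x y : S, ∑ g : (S × A) → S, (if y = s' then μ x y * ν g else 0)
            = (if y = s' then μ x y else 0) := by
          intro x y
          by_cases hy : y = s' <;> simp [hy, ← Finset.mul_sum, hν1]
        simp_rw [k1, Finset.sum_ite_eq' Finset.univ s', Finset.mem_univ, if_true]
        rw [hcol s']
        rw [Prod.mk.injEq] at h2
        rw [h2.1, h2.2]
      · have c1 : ((s, a) = (sc, ac)) = False := eq_false h1
        have c2 : ((s, a) = (st, a_t)) = False := eq_false h2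
        simp only [hfV, hθV, c1, c2, if_true, if_false, ite_true, ite_false]
        have k1 : ∀ x y : S, ∑ g : (S × A) → S, (if g (s, a) = s' then μ x y * ν g else 0)
            = μ x y * P s' s a := by
          intro x y
          rw [← hfib (s, a) s', Finset.mul_sum]
          refine Finset.sum_congr rfl fun g _ => ?_
          by_cases hg : g (s, a) = s' <;> simp [hg]
        simp_rw [k1, ← Finset.sum_mul]
        rw [hμtot, one_mul]
  have hnum : ∑ v, (if (fV sc ac v = sc' ∧ fV st a_t v = st1) then θV v else 0) = 0 := by
    rw [Fintype.sum_prod_type]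
    simp_rw [Fintype.sum_prod_type]
    have hc1 : ∀ u : S × S × ((S × A) → S), fV sc ac u = u.1 := by
      intro u; simp [hfV]
    have hc2 : ∀ u : S × S × ((S × A) → S), fV st a_t u = u.2.1 := by
      intro u
      simp only [hfV, eq_false (Ne.symm hne), eq_self_iff_true, if_true, if_false,
        ite_true, ite_false]
    simp_rw [hc1, hc2]
    have k1 : ∀ x y : S, ∑ g : (S × A) → S,
        (if ((x, y, g) : S × S × ((S × A) → S)).1 = sc'
            ∧ ((x, y, g) : S × S × ((S × A) → S)).2.1 = st1 then θV (x, y, g) else 0)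
        = (if x = sc' ∧ y = st1 then μ x y else 0) := by
      intro x y
      by_cases hxy : x = sc' ∧ y = st1 <;>
        simp [hxy, hθV, ← Finset.mul_sum, hν1]
    simp_rw [k1]
    have k2 : ∀ x : S, ∑ y : S, (if x = sc' ∧ y = st1 then μ x y else 0)
        = (if x = sc' then μ x st1 else 0) := by
      intro x
      by_cases hx : x = sc' <;> simp [hx, Finset.sum_ite_eq' Finset.univ st1]
    simp_rw [k2, Finset.sum_ite_eq' Finset.univ sc', Finset.mem_univ, if_true, hμz]
  -- transport to a `Type`-level finite type
  refine ⟨Fin (Fintype.card (S × S × ((S × A) → S))), inferInstance,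
    fun s a u => fV s a ((Fintype.equivFin (S × S × ((S × A) → S))).symm u),
    fun u => θV ((Fintype.equivFin (S × S × ((S × A) → S))).symm u), ?_, ?_, ?_, ?_⟩
  · exact fun u => hθ0 _
  · rw [Equiv.sum_comp ((Fintype.equivFin (S × S × ((S × A) → S))).symm) θV]
    exact hθ1
  · intro s a s'
    rw [Finset.sum_filter]
    rw [Equiv.sum_comp ((Fintype.equivFin (S × S × ((S × A) → S))).symm)
      (fun v => if fV s a v = s' then θV v else 0)]
    exact hmarg s a s'
  · rw [Finset.sum_filter]
    rw [Equiv.sum_comp ((Fintype.equivFin (S × S × ((S × A) → S))).symm)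
      (fun v => if (fV sc ac v = sc' ∧ fV st a_t v = st1) then θV v else 0)]
    rw [hnum]
    exact zero_div _
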